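/- Let n be an even positive integer, let p, q ≥ 0 be integers with p + q = n/2, and let a ∈ {-1,0,1}^n be a vector with exactly p coordinates equal to 1, exactly q coordinates equal to −1, and exactly n/2 coordinates equal to 0. Then for every L > 0, every u ∈ (0,1) and every v ∈ ℝ^n, one has CLCD_{2L/n, √2·u}(v) ≤ CLCD^a_{L,u}(v). -/

import Mathlib

open Real

noncomputable section

/-- Euclidean norm of a finitely indexed real vector. -/
def pnorm {ι : Type*} [Fintype ι] (x : ι → ℝ) : ℝ := Real.sqrt (∑ i, x i ^ 2)

/-- Index type for the coordinates of `D(v)`: pairs `(i, j)` with `i < j`. -/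
abbrev PairIdx (n : ℕ) := {p : Fin n × Fin n // p.1 < p.2}

/-- `D(v)`: the vector in `ℝ^{n(n-1)/2}` whose `(i,j)`-coordinate is `v i - v j`
for `i < j`. -/
def Dvec {n : ℕ} (v : Fin n → ℝ) : PairIdx n → ℝ := fun p => v p.1.1 - v p.1.2

/-- Euclidean distance from a vector to the integer lattice. -/
def latDist {ι : Type*} [Fintype ι] (x : ι → ℝ) : ℝ :=
  ⨅ m : ι → ℤ, pnorm (fun i => x i - (m i : ℝ))

/-- The combinatorial least common denominator
`CLCD_{α,γ}(v) = inf {θ > 0 : dist(θ D(v), ℤ^{n(n-1)/2}) < min(γ ‖θ D(v)‖₂, α)}`,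
as an extended nonnegative real (`∞` if no such `θ` exists). -/
def CLCD (n : ℕ) (α γ : ℝ) (v : Fin n → ℝ) : ENNReal :=
  sInf {θ : ENNReal | ∃ t : ℝ, 0 < t ∧ θ = ENNReal.ofReal t ∧
    latDist (fun p => t * Dvec v p) < min (γ * pnorm (fun p => t * Dvec v p)) α}

/-- `D(a) ⊗ D(v)`: the vector in `ℝ^{(n(n-1)/2)²}` whose `(i,j,k,ℓ)`-coordinate is
`(a i − a j)(v k − v ℓ)` for `i < j` and `k < ℓ`. -/
def Dtensor {n : ℕ} (a v : Fin n → ℝ) : PairIdx n × PairIdx n → ℝ :=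
  fun pq => Dvec a pq.1 * Dvec v pq.2

/-- The combinatorial least common denominator of the pair `(a, v)`:
`CLCD^a_{L,u}(v) = inf {θ > 0 : dist(θ (D(a) ⊗ D(v)), ℤ^{(n(n-1)/2)²})
  < min(u ‖θ (D(a) ⊗ D(v))‖₂, L)}`, as an extended nonnegative real. -/
def CLCDpair (n : ℕ) (L u : ℝ) (a v : Fin n → ℝ) : ENNReal :=
  sInf {θ : ENNReal | ∃ t : ℝ, 0 < t ∧ θ = ENNReal.ofReal t ∧
    latDist (fun pq => t * Dtensor a v pq) <
      min (u * pnorm (fun pq => t * Dtensor a v pq)) L}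

section Aux
variable {ι : Type*} [Fintype ι]
lemma pnorm_nonneg (x : ι → ℝ) : 0 ≤ pnorm x := Real.sqrt_nonneg _
lemma pnorm_sq_eq (x : ι → ℝ) : pnorm x ^ 2 = ∑ i, x i ^ 2 :=
  Real.sq_sqrt (Finset.sum_nonneg fun _ _ => sq_nonneg _)
lemma latDist_nonneg (x : ι → ℝ) : 0 ≤ latDist x :=
  le_ciInf fun _ => Real.sqrt_nonneg _
lemma latDist_le (x : ι → ℝ) (m : ι → ℤ) :
    latDist x ≤ pnorm (fun i => x i - (m i : ℝ)) :=
  ciInf_le ⟨0, by rintro y ⟨m', rfl⟩; exact Real.sqrt_nonneg _⟩ m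
end Aux

lemma count_pairs {n : ℕ} (A B : Fin n → Prop) [DecidablePred A] [DecidablePred B]
    (hd : ∀ i, A i → B i → False) :
    (Finset.univ.filter fun b : PairIdx n =>
        (A b.1.1 ∧ B b.1.2) ∨ (B b.1.1 ∧ A b.1.2)).card
      = (Finset.univ.filter A).card * (Finset.univ.filter B).card := by
  classical
  rw [← Finset.card_product]
  refine Finset.card_bij
    (fun b _ => if A b.1.1 then (b.1.1, b.1.2) else (b.1.2, b.1.1)) ?_ ?_ ?_
  · intro b hb
    simp only [Finset.mem_filter, Finset.mem_univ, true_and] at hb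
    by_cases h : A b.1.1
    · have hB : B b.1.2 := by
        rcases hb with ⟨_, h2⟩ | ⟨h1, _⟩
        · exact h2
        · exact absurd h1 (fun h1 => hd _ h h1)
      simp [h, Finset.mem_product, Finset.mem_filter, hB]
    · rcases hb with ⟨h1, _⟩ | ⟨h1, h2⟩
      · exact absurd h1 h
      · simp [h, Finset.mem_product, Finset.mem_filter, h1, h2]
  · intro b1 hb1 b2 hb2 h
    by_cases h1 : A b1.1.1 <;> by_cases h2 : A b2.1.1 <;>
      simp only [h1, h2, if_pos, if_neg, if_true, if_false, Prod.mk.injEq] at h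
    · exact Subtype.ext (Prod.ext h.1 h.2)
    · have hlt : b2.1.2 < b2.1.1 := by rw [← h.1, ← h.2]; exact b1.2
      exact absurd b2.2 (lt_asymm hlt)
    · have hlt : b2.1.2 < b2.1.1 := by rw [← h.1, ← h.2]; exact b1.2
      exact absurd b2.2 (lt_asymm hlt)
    · exact Subtype.ext (Prod.ext h.2 h.1)
  · intro c hc
    simp only [Finset.mem_product, Finset.mem_filter, Finset.mem_univ, true_and] at hc
    obtain ⟨hA, hB⟩ := hc
    have hne : c.1 ≠ c.2 := fun h => hd _ hA (h ▸ hB)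
    rcases lt_or_gt_of_ne hne with h | h
    · refine ⟨⟨(c.1, c.2), h⟩, ?_, ?_⟩
      · simp only [Finset.mem_filter, Finset.mem_univ, true_and]
        exact Or.inl ⟨hA, hB⟩
      · simp [hA]
    · refine ⟨⟨(c.2, c.1), h⟩, ?_, ?_⟩
      · simp only [Finset.mem_filter, Finset.mem_univ, true_and]
        exact Or.inr ⟨hB, hA⟩
      · have hnA : ¬ A c.2 := fun hA2 => hd _ hA2 hB
        simp [hnA]

/-- let `n` be even, `p + q = n/2`, and let `a ∈ {-1,0,1}^n` have exactly
`p` coordinates equal to `1`, exactly `q` coordinates equal to `−1` and exactly `n/2`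
coordinates equal to `0`. Then for every `L > 0`, `u ∈ (0,1)` and `v ∈ ℝ^n`,
`CLCD_{2L/n, √2 u}(v) ≤ CLCD^a_{L,u}(v)`. -/
theorem stmt19 {n : ℕ} (hn : 0 < n) (hEven : Even n) (p q : ℕ) (hpq : p + q = n / 2)
    (a : Fin n → ℝ) (ha : ∀ i, a i = -1 ∨ a i = 0 ∨ a i = 1)
    (hp : Nat.card {i : Fin n // a i = 1} = p)
    (hq : Nat.card {i : Fin n // a i = -1} = q)
    (h0 : Nat.card {i : Fin n // a i = 0} = n / 2)
    (L u : ℝ) (hL : 0 < L) (hu : 0 < u) (hu1 : u < 1) (v : Fin n → ℝ) :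
    CLCD n (2 * L / n) (Real.sqrt 2 * u) v ≤ CLCDpair n L u a v := by
  classical
  obtain ⟨k, hk⟩ := hEven
  have hk2 : n / 2 = k := by omega
  have hkpos : 0 < k := by omega
  have hpqk : p + q = k := by omega
  apply sInf_le_sInf
  rintro θ ⟨t, ht, rfl, hdist⟩
  refine ⟨t, ht, rfl, ?_⟩
  set dv : PairIdx n → ℝ := fun qq => t * Dvec v qq with hdv
  set DT : PairIdx n × PairIdx n → ℝ := fun pq => t * Dtensor a v pq with hDT
  -- cardinalities
  have hcards : ∀ (P : Fin n → Prop) [DecidablePred P],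
      (Finset.univ.filter P).card = Nat.card {i : Fin n // P i} := by
    intro P _
    rw [Nat.card_eq_fintype_card, Fintype.card_subtype]
  have hone : (Finset.univ.filter fun i => a i = 1).card = p := by rw [hcards]; exact hp
  have hmone : (Finset.univ.filter fun i => a i = -1).card = q := by rw [hcards]; exact hq
  have hzero : (Finset.univ.filter fun i => a i = 0).card = k := by
    rw [hcards]; rw [h0]; exact hk2
  have hnz : (Finset.univ.filter fun i => a i ≠ 0).card = p + q := by
    have hset : (Finset.univ.filter fun i => a i ≠ 0)
        = (Finset.univ.filter fun i => a i = 1) ∪ (Finset.univ.filter fun i => a i = -1) := by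
      ext i
      simp only [Finset.mem_filter, Finset.mem_univ, true_and, Finset.mem_union]
      rcases ha i with h | h | h <;> rw [h] <;> norm_num
    rw [hset, Finset.card_union_of_disjoint, hone, hmone]
    rw [Finset.disjoint_left]
    intro i hi1 hi2
    simp only [Finset.mem_filter, Finset.mem_univ, true_and] at hi1 hi2
    rw [hi1] at hi2; norm_num at hi2
  set S : Finset (PairIdx n) := Finset.univ.filter
    (fun b : PairIdx n => (a b.1.1 = 0 ∧ a b.1.2 ≠ 0) ∨ (a b.1.1 ≠ 0 ∧ a b.1.2 = 0)) with hSdef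
  set T : Finset (PairIdx n) := Finset.univ.filter
    (fun b : PairIdx n => (a b.1.1 = 1 ∧ a b.1.2 = -1) ∨ (a b.1.1 = -1 ∧ a b.1.2 = 1)) with hTdef
  have hScard : S.card = k * k := by
    have h := count_pairs (fun i => a i = 0) (fun i => a i ≠ 0) (fun i h1 h2 => h2 h1)
    rw [hzero, hnz, hpqk] at h
    rw [hSdef]
    exact h
  have hTcard : T.card = p * q := by
    have h := count_pairs (fun i => a i = 1) (fun i => a i = -1)
      (fun i h1 h2 => by
        have h1' : a i = 1 := h1
        have h2' : a i = -1 := h2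
        rw [h1'] at h2'; norm_num at h2')
    rw [hone, hmone] at h
    rw [hTdef]
    exact h
  -- sum of squares of Dvec a
  have hpt : ∀ b : PairIdx n, Dvec a b ^ 2
      = (if b ∈ S then (1 : ℝ) else 0) + (if b ∈ T then 4 else 0) := by
    intro b
    rcases ha b.1.1 with h1 | h1 | h1 <;> rcases ha b.1.2 with h2 | h2 | h2 <;>
      simp only [hSdef, hTdef, Finset.mem_filter, Finset.mem_univ, true_and, Dvec,
        h1, h2] <;> norm_num
  have hDa : ∑ b : PairIdx n, Dvec a b ^ 2 = (S.card : ℝ) + 4 * T.card := by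
    rw [Finset.sum_congr rfl (fun b _ => hpt b), Finset.sum_add_distrib]
    simp [Finset.sum_ite_mem, mul_comm]
  have hDa2 : ∑ b : PairIdx n, Dvec a b ^ 2 ≤ 2 * (k : ℝ) ^ 2 := by
    rw [hDa, hScard, hTcard]
    have hpqR : (p : ℝ) + q = k := by exact_mod_cast hpqk
    push_cast
    nlinarith [sq_nonneg ((p : ℝ) - q), hpqR]
  -- block inequality
  have hblock : ∀ m : PairIdx n × PairIdx n → ℤ,
      latDist dv * k ≤ pnorm (fun pq => DT pq - (m pq : ℝ)) := by
    intro m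
    have hsq : (latDist dv * k) ^ 2 ≤ pnorm (fun pq => DT pq - (m pq : ℝ)) ^ 2 := by
      rw [pnorm_sq_eq]
      rw [Fintype.sum_prod_type]
      have hSle : ∀ b ∈ S, latDist dv ^ 2 ≤ ∑ qq : PairIdx n,
          (DT (b, qq) - (m (b, qq) : ℝ)) ^ 2 := by
        intro b hb
        have hb' : Dvec a b = 1 ∨ Dvec a b = -1 := by
          rw [hSdef] at hb
          simp only [Finset.mem_filter, Finset.mem_univ, true_and] at hb
          rcases hb with ⟨h1, h2⟩ | ⟨h1, h2⟩
          · rcases ha b.1.2 with h | h | h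
            · left; simp [Dvec, h1, h]
            · exact absurd h h2
            · right; simp [Dvec, h1, h]
          · rcases ha b.1.1 with h | h | h
            · right; simp [Dvec, h2, h]
            · exact absurd h h1
            · left; simp [Dvec, h2, h]
        rcases hb' with hε | hε
        · calc latDist dv ^ 2
              ≤ pnorm (fun qq => dv qq - (m (b, qq) : ℝ)) ^ 2 :=
                pow_le_pow_left₀ (latDist_nonneg _) (latDist_le dv fun qq => m (b, qq)) 2
            _ = ∑ qq : PairIdx n, (dv qq - (m (b, qq) : ℝ)) ^ 2 := pnorm_sq_eq _
            _ = ∑ qq : PairIdx n, (DT (b, qq) - (m (b, qq) : ℝ)) ^ 2 := by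
                refine Finset.sum_congr rfl fun qq _ => ?_
                simp only [hdv, hDT, Dtensor, hε]
                ring
        · calc latDist dv ^ 2
              ≤ pnorm (fun qq => dv qq - ((-(m (b, qq)) : ℤ) : ℝ)) ^ 2 :=
                pow_le_pow_left₀ (latDist_nonneg _) (latDist_le dv fun qq => -(m (b, qq))) 2
            _ = ∑ qq : PairIdx n, (dv qq - ((-(m (b, qq)) : ℤ) : ℝ)) ^ 2 := pnorm_sq_eq _
            _ = ∑ qq : PairIdx n, (DT (b, qq) - (m (b, qq) : ℝ)) ^ 2 := by
                refine Finset.sum_congr rfl fun qq _ => ?_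
                simp only [hdv, hDT, Dtensor, hε]
                push_cast
                ring
      calc (latDist dv * k) ^ 2
          = ∑ _b ∈ S, latDist dv ^ 2 := by
            rw [Finset.sum_const, hScard, nsmul_eq_mul]
            push_cast
            ring
        _ ≤ ∑ b ∈ S, ∑ qq : PairIdx n, (DT (b, qq) - (m (b, qq) : ℝ)) ^ 2 :=
            Finset.sum_le_sum hSle
        _ ≤ ∑ b : PairIdx n, ∑ qq : PairIdx n, (DT (b, qq) - (m (b, qq) : ℝ)) ^ 2 :=
            Finset.sum_le_sum_of_subset_of_nonneg (Finset.subset_univ S)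
              (fun b _ _ => Finset.sum_nonneg fun qq _ => sq_nonneg _)
    have h1 : 0 ≤ latDist dv * k := mul_nonneg (latDist_nonneg _) (Nat.cast_nonneg k)
    calc latDist dv * k = Real.sqrt ((latDist dv * k) ^ 2) := (Real.sqrt_sq h1).symm
      _ ≤ Real.sqrt (pnorm (fun pq => DT pq - (m pq : ℝ)) ^ 2) := Real.sqrt_le_sqrt hsq
      _ = pnorm (fun pq => DT pq - (m pq : ℝ)) := Real.sqrt_sq (pnorm_nonneg _)
  have hd_le : latDist dv * k ≤ latDist DT := le_ciInf hblock
  -- norm of DT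
  have hDTnorm : pnorm DT ≤ Real.sqrt 2 * k * pnorm dv := by
    have h1 : pnorm DT ^ 2 = (∑ b : PairIdx n, Dvec a b ^ 2) * pnorm dv ^ 2 := by
      rw [pnorm_sq_eq, pnorm_sq_eq, Fintype.sum_prod_type, Finset.sum_mul_sum]
      refine Finset.sum_congr rfl fun b _ => Finset.sum_congr rfl fun qq _ => ?_
      simp only [hDT, hdv, Dtensor]
      ring
    have h2 : pnorm DT ^ 2 ≤ (Real.sqrt 2 * k * pnorm dv) ^ 2 := by
      have hrhs : (Real.sqrt 2 * k * pnorm dv) ^ 2 = 2 * (k : ℝ) ^ 2 * pnorm dv ^ 2 := by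
        rw [mul_pow, mul_pow, Real.sq_sqrt (by norm_num : (0:ℝ) ≤ 2)]
      rw [h1, hrhs]
      exact mul_le_mul_of_nonneg_right hDa2 (sq_nonneg _)
    calc pnorm DT = Real.sqrt (pnorm DT ^ 2) := (Real.sqrt_sq (pnorm_nonneg _)).symm
      _ ≤ Real.sqrt ((Real.sqrt 2 * k * pnorm dv) ^ 2) := Real.sqrt_le_sqrt h2
      _ = Real.sqrt 2 * k * pnorm dv := Real.sqrt_sq (mul_nonneg (mul_nonneg (Real.sqrt_nonneg 2) (Nat.cast_nonneg k)) (pnorm_nonneg dv))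
  -- conclude
  have hkR : (0 : ℝ) < k := Nat.cast_pos.mpr hkpos
  have hnR : (n : ℝ) = 2 * k := by
    have : n = 2 * k := by omega
    exact_mod_cast congrArg (Nat.cast : ℕ → ℝ) this
  refine lt_min ?_ ?_
  · have hlt : latDist dv * k < (Real.sqrt 2 * u * pnorm dv) * k := by
      calc latDist dv * k ≤ latDist DT := hd_le
        _ < u * pnorm DT := lt_of_lt_of_le hdist (min_le_left _ _)
        _ ≤ u * (Real.sqrt 2 * k * pnorm dv) :=
            mul_le_mul_of_nonneg_left hDTnorm hu.le
        _ = (Real.sqrt 2 * u * pnorm dv) * k := by ring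
    exact lt_of_mul_lt_mul_right hlt hkR.le
  · have hlt : latDist dv * k < (2 * L / n) * k := by
      calc latDist dv * k ≤ latDist DT := hd_le
        _ < L := lt_of_lt_of_le hdist (min_le_right _ _)
        _ = (2 * L / n) * k := by rw [hnR]; field_simp
    exact lt_of_mul_lt_mul_right hlt hkR.le


end
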